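/- arXiv:1408.4490 — 4 statements merged into one kernel-verified Lean document; each statement's English description precedes it below -/
import Mathlib

section
/- Sub-path optimality fails for the stochastic on-time arrival problem: there exists a stochastic network, a source s, destination d, and budget T such that the most reliable s–d path within budget T passes through an intermediate node v via a sub-path that is strictly dominated (has strictly lower reliability from s to v) at every feasible intermediate budget by another s–v path. -/
open Finset

/-- PMF of edge e1 : P(X=2)=0.9, P(X=3)=0.1. -/
noncomputable def pmfE1 : ℕ → ℝ := fun t => if t = 2 then 0.9 else if t = 3 then 0.1 else 0
/-- PMF of edge e2 : P(X=1)=0.5, P(X=2)=0.3, P(X=3)=0.1, P(X=4)=0.1. -/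
noncomputable def pmfE2 : ℕ → ℝ := fun t =>
  if t = 1 then 0.5 else if t = 2 then 0.3 else if t = 3 then 0.1 else if t = 4 then 0.1 else 0
/-- PMF of edge e3 : P(X=1)=0.6, P(X=4)=0.4. -/
noncomputable def pmfE3 : ℕ → ℝ := fun t => if t = 1 then 0.6 else if t = 4 then 0.4 else 0
/-- PMF of edge e4 : P(X=2)=0.5, P(X=3)=0.5. -/
noncomputable def pmfE4 : ℕ → ℝ := fun t => if t = 2 then 0.5 else if t = 3 then 0.5 else 0

/-- CDF of a PMF. -/
noncomputable def cdfOf (p : ℕ → ℝ) (t : ℕ) : ℝ := ∑ τ ∈ range (t + 1), p τ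

/-- Reliability of the two-edge path (e, e4) from v1 to v3 with budget 4:
`P(X_e + X_{e4} ≤ 4)` for independent edge travel times. -/
noncomputable def relWithE4 (p : ℕ → ℝ) : ℝ := ∑ t ∈ range 5, p t * cdfOf pmfE4 (4 - t)

/-- Sub-path optimality fails for the SOTA problem.  In the network
v1 →(e1,e2,e3)→ v2 →(e4)→ v3 with the given travel-time distributions and budget
T = 4, the path (e2,e4) is strictly more reliable than both (e1,e4) and (e3,e4),
even though the sub-path e2 (from v1 to v2) is strictly dominated at every feasible
intermediate budget t ∈ {1,2,3} by another v1–v2 path (namely e1 or e3). -/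
theorem sota_subpath_optimality_fails :
    relWithE4 pmfE1 < relWithE4 pmfE2 ∧
    relWithE4 pmfE3 < relWithE4 pmfE2 ∧
    ∀ t ∈ Finset.Icc 1 3, cdfOf pmfE2 t < max (cdfOf pmfE1 t) (cdfOf pmfE3 t) := by
  refine ⟨?_, ?_, ?_⟩
  · simp [relWithE4, cdfOf, pmfE1, pmfE2, pmfE4, Finset.sum_range_succ]; norm_num
  · simp [relWithE4, cdfOf, pmfE3, pmfE2, pmfE4, Finset.sum_range_succ]; norm_num
  · intro t ht
    fin_cases ht <;> simp [cdfOf, pmfE1, pmfE2, pmfE3, Finset.sum_range_succ] <;> norm_num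
end

section
/- Arc-Potential pruning is sound: if φ_{ij} is defined as the minimum time budget t for which edge (i,j) is realizable under the optimal policy toward some destination in region D (i.e., there is positive probability of traversing (i,j) when following the optimal policy from the source with budget t), then for any query with budget T < φ_{ij}, removing edge (i,j) from the graph does not change the optimal policy value u_s(T) or the optimal path. -/
open Finset
open scoped NNReal

/-- One step of a positive-probability trajectory that follows the policy `w`. -/
def PolicyStep {V : Type*} (p : V → V → ℕ → ℝ≥0) (w : V → ℕ → V) :
    V × ℕ → V × ℕ → Prop :=
  fun a b => b.1 = w a.1 a.2 ∧ b.2 < a.2 ∧ 0 < p a.1 b.1 (a.2 - b.2)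

/-- Edge `(a,b)` is realizable under the optimal policy `w` when starting from `s`
with budget `T`: some positive-probability trajectory following `w` reaches `a`
with a remaining budget `t` at which the policy chooses `b`. -/
def EdgeRealizable {V : Type*} (p : V → V → ℕ → ℝ≥0) (w : V → ℕ → V)
    (s : V) (T : ℕ) (a b : V) : Prop :=
  ∃ t : ℕ, Relation.ReflTransGen (PolicyStep p w) (s, T) (a, t) ∧ w a t = b

/-- Soundness of Arc-Potential pruning.  Let `u` be the Bellman value
on the full graph, `w` an optimal policy attaining it, and suppose the arc
potential of edge `(a,b)` exceeds the query budget `T`, i.e. `(a,b)` is not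
realizable under the optimal policy from `s` for budget `T` (this holds whenever
`T < φ_{ab}`).  Then the Bellman value `u'` computed on the graph with edge `(a,b)`
removed satisfies `u'_s(T) = u_s(T)`: pruning the edge does not change the optimal
policy value. -/
theorem arc_potential_pruning_sound
    {V : Type*} [Fintype V] [DecidableEq V]
    (neighbors : V → Finset V) (d : V)
    (p : V → V → ℕ → ℝ≥0) (δ : V → V → ℕ)
    (u u' : V → ℕ → ℝ≥0) (w : V → ℕ → V)
    (s a b : V) (T : ℕ)
    (hp_mass : ∀ i j n, ∑ τ ∈ Finset.range n, p i j τ ≤ 1)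
    (hδ_one : ∀ i j, 1 ≤ δ i j)
    (hp_supp : ∀ i j τ, τ < δ i j → p i j τ = 0)
    -- `u` is the Bellman value on the full graph
    (hu_dest : ∀ t, u d t = 1)
    (hu_rec : ∀ i, i ≠ d → ∀ t,
      u i t = (neighbors i).sup
        (fun j => ∑ τ ∈ Finset.Icc (δ i j) t, p i j τ * u j (t - τ)))
    -- `w` is an optimal policy attaining `u`
    (hw_mem : ∀ i, i ≠ d → ∀ t, w i t ∈ neighbors i)
    (hw_opt : ∀ i, i ≠ d → ∀ t,
      u i t = ∑ τ ∈ Finset.Icc (δ i (w i t)) t, p i (w i t) τ * u (w i t) (t - τ))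
    -- `u'` is the Bellman value on the graph with edge `(a,b)` removed
    (hu'_dest : ∀ t, u' d t = 1)
    (hu'_rec : ∀ i, i ≠ d → ∀ t,
      u' i t = ((if i = a then (neighbors a).erase b else neighbors i)).sup
        (fun j => ∑ τ ∈ Finset.Icc (δ i j) t, p i j τ * u' j (t - τ)))
    -- the edge `(a,b)` is never realizable from `(s,T)` under the optimal policy
    (hnr : ¬ EdgeRealizable p w s T a b) :
    u' s T = u s T := by
  -- Part A: u' ≤ u everywhere (fewer neighbors can only decrease the sup).
  have hA : ∀ t i, u' i t ≤ u i t := by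
    intro t
    induction t using Nat.strong_induction_on with
    | _ t ih =>
      intro i
      by_cases hd : i = d
      · subst hd; rw [hu_dest, hu'_dest]
      · rw [hu_rec i hd, hu'_rec i hd]
        apply Finset.sup_le
        intro j hj
        have hjn : j ∈ neighbors i := by
          by_cases hia : i = a
          · subst hia; rw [if_pos rfl] at hj; exact Finset.mem_of_mem_erase hj
          · rwa [if_neg hia] at hj
        refine le_trans ?_ (Finset.le_sup hjn)
        apply Finset.sum_le_sum
        intro τ hτ
        obtain ⟨hτδ, hτt⟩ := Finset.mem_Icc.1 hτ
        have hτ1 : 1 ≤ τ := le_trans (hδ_one i j) hτδ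
        have hlt : t - τ < t := Nat.sub_lt (lt_of_lt_of_le hτ1 hτt) hτ1
        exact mul_le_mul_right (ih _ hlt j) _
  -- Part B: u ≤ u' at states reachable from (s, T) under the policy.
  have hB : ∀ t i, Relation.ReflTransGen (PolicyStep p w) (s, T) (i, t) →
      u i t ≤ u' i t := by
    intro t
    induction t using Nat.strong_induction_on with
    | _ t ih =>
      intro i hreach
      by_cases hd : i = d
      · subst hd; rw [hu_dest, hu'_dest]
      · rw [hw_opt i hd t, hu'_rec i hd]
        set j := w i t with hj
        have hjn : j ∈ (if i = a then (neighbors a).erase b else neighbors i) := by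
          by_cases hia : i = a
          · subst hia
            rw [if_pos rfl]
            refine Finset.mem_erase.2 ⟨?_, hw_mem i hd t⟩
            intro hjb
            exact hnr ⟨t, hreach, hjb⟩
          · rw [if_neg hia]; exact hw_mem i hd t
        refine le_trans ?_ (Finset.le_sup hjn)
        apply Finset.sum_le_sum
        intro τ hτ
        obtain ⟨hτδ, hτt⟩ := Finset.mem_Icc.1 hτ
        by_cases hp0 : p i j τ = 0
        · simp [hp0]
        · have hppos : 0 < p i j τ := zero_lt_iff.mpr hp0
          have hτ1 : 1 ≤ τ := le_trans (hδ_one i j) hτδ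
          have hlt : t - τ < t := Nat.sub_lt (lt_of_lt_of_le hτ1 hτt) hτ1
          have hstep : PolicyStep p w (i, t) (j, t - τ) := by
            refine ⟨rfl, hlt, ?_⟩
            have h' : t - (t - τ) = τ := Nat.sub_sub_self hτt
            simpa [h'] using hppos
          exact mul_le_mul_right (ih _ hlt j (hreach.tail hstep)) _
  exact le_antisymm (hA T s) (hB T s Relation.ReflTransGen.refl)
end

section
/- The mixed reliability of a path prefix ending at node i, r^P_{si}(T) = Σ_{t=0}^{T} q^P_{si}(t) u_i(T−t), upper-bounds the reliability of every completion of P to the destination: for any path P' from i to d, Σ_{t=0}^T q^{P∥P'}_{sd}(t) ≤ r^P_{si}(T) (discrete-time version). -/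
open Finset
open scoped NNReal

/-- Discrete convolution of two PMFs on ℕ. -/
noncomputable def dconv (f g : ℕ → ℝ≥0) : ℕ → ℝ≥0 :=
  fun t => ∑ τ ∈ Finset.range (t + 1), f τ * g (t - τ)

/-- Discrete travel-time PMF of a path given as a nonempty list of edges. -/
noncomputable def dPathPMF {V : Type*} (p : V → V → ℕ → ℝ≥0)
    (e : V × V) (es : List (V × V)) : ℕ → ℝ≥0 :=
  es.foldl (fun f e' => dconv f (p e'.1 e'.2)) (p e.1 e.2)


lemma dconv_mk (f g : ℕ → ℝ≥0) :
    PowerSeries.mk (dconv f g) = PowerSeries.mk f * PowerSeries.mk g := by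
  ext t
  rw [PowerSeries.coeff_mk, PowerSeries.coeff_mul,
    Finset.Nat.sum_antidiagonal_eq_sum_range_succ_mk]
  simp [dconv]

lemma dconv_assoc (f g h : ℕ → ℝ≥0) :
    dconv (dconv f g) h = dconv f (dconv g h) := by
  funext t
  have H : PowerSeries.mk (dconv (dconv f g) h)
      = PowerSeries.mk (dconv f (dconv g h)) := by
    rw [dconv_mk, dconv_mk, dconv_mk, dconv_mk, mul_assoc]
  have := congrArg (fun φ => PowerSeries.coeff t φ) H
  simpa using this

lemma sum_dconv (f g : ℕ → ℝ≥0) (T : ℕ) :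
    ∑ t ∈ range (T + 1), dconv f g t
      = ∑ τ ∈ range (T + 1), f τ * ∑ t' ∈ range (T - τ + 1), g t' := by
  simp only [dconv]
  rw [Finset.sum_comm' (t' := range (T + 1)) (s' := fun τ => Finset.Icc τ T)]
  · refine Finset.sum_congr rfl fun τ hτ => ?_
    rw [Finset.mul_sum, ← Finset.Ico_add_one_right_eq_Icc, Finset.sum_Ico_eq_sum_range]
    have hτT : τ ≤ T := by simpa using Nat.lt_succ_iff.mp (mem_range.mp hτ)
    have : T + 1 - τ = T - τ + 1 := by omega
    rw [this]
    refine Finset.sum_congr rfl fun j _ => ?_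
    have hj : τ + j - τ = j := by omega
    rw [hj]
  · intro x y
    simp only [mem_range, mem_Icc]
    omega

lemma foldl_dconv {V : Type*} (p : V → V → ℕ → ℝ≥0) :
    ∀ (l : List (V × V)) (f : ℕ → ℝ≥0) (e' : V × V),
      List.foldl (fun g x => dconv g (p x.1 x.2)) f (e' :: l)
        = dconv f (dPathPMF p e' l) := by
  intro l
  induction l with
  | nil => intro f e'; simp [dPathPMF]
  | cons x rest ih =>
      intro f e'
      have h1 : List.foldl (fun g x => dconv g (p x.1 x.2)) f (e' :: x :: rest)
          = List.foldl (fun g x => dconv g (p x.1 x.2)) (dconv f (p e'.1 e'.2)) (x :: rest) := rfl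
      rw [h1, ih, dconv_assoc]
      have : dPathPMF p e' (x :: rest)
          = List.foldl (fun g y => dconv g (p y.1 y.2)) (p e'.1 e'.2) (x :: rest) := rfl
      rw [this, ih]

lemma dPathPMF_append {V : Type*} (p : V → V → ℕ → ℝ≥0)
    (e : V × V) (es : List (V × V)) (e' : V × V) (es' : List (V × V)) :
    dPathPMF p e (es ++ e' :: es')
      = dconv (dPathPMF p e es) (dPathPMF p e' es') := by
  unfold dPathPMF
  rw [List.foldl_append]
  exact foldl_dconv p es' _ e'

lemma path_reliability_le {V : Type*}
    (E : V → V → Prop) (p : V → V → ℕ → ℝ≥0) (δ : V → V → ℕ)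
    (u : V → ℕ → ℝ≥0) (d : V)
    (hp_supp : ∀ a b τ, τ < δ a b → p a b τ = 0)
    (hu_dest : ∀ t, u d t = 1)
    (hu_adm : ∀ a b, E a b → ∀ t,
      (∑ τ ∈ Finset.Icc (δ a b) t, p a b τ * u b (t - τ)) ≤ u a t) :
    ∀ (es' : List (V × V)) (e' : V × V),
      ((e' :: es').getLast (List.cons_ne_nil e' es')).2 = d →
      List.Chain' (fun a b => a.2 = b.1) (e' :: es') →
      (∀ x ∈ e' :: es', E x.1 x.2) →
      ∀ t, (∑ τ ∈ range (t + 1), dPathPMF p e' es' τ) ≤ u e'.1 t := by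
  intro es'
  induction es' with
  | nil =>
      intro e' hend _ hedges t
      simp only [List.getLast_singleton] at hend
      calc ∑ τ ∈ range (t + 1), dPathPMF p e' [] τ
          = ∑ τ ∈ range (t + 1), p e'.1 e'.2 τ * u e'.2 (t - τ) := by
            refine Finset.sum_congr rfl fun τ _ => ?_
            simp [dPathPMF, hend, hu_dest]
        _ = ∑ τ ∈ Finset.Icc (δ e'.1 e'.2) t, p e'.1 e'.2 τ * u e'.2 (t - τ) := by
            refine (Finset.sum_subset ?_ ?_).symm
            · intro x hx; simp only [mem_Icc] at hx; simp [mem_range]; omega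
            · intro x hx hnx
              simp only [mem_range] at hx
              simp only [mem_Icc] at hnx
              have hlt : x < δ e'.1 e'.2 := by omega
              simp [hp_supp _ _ _ hlt]
        _ ≤ u e'.1 t := hu_adm e'.1 e'.2 (hedges e' (by simp)) t
  | cons x rest ih =>
      intro e' hend hchain hedges t
      have hx1 : e'.2 = x.1 := (List.isChain_cons_cons.mp hchain).1
      have hsplit : dPathPMF p e' (x :: rest)
          = dconv (p e'.1 e'.2) (dPathPMF p x rest) := by
        have : dPathPMF p e' (x :: rest)
            = List.foldl (fun g y => dconv g (p y.1 y.2)) (p e'.1 e'.2) (x :: rest) := rfl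
        rw [this, foldl_dconv]
      have hchain2 : List.Chain' (fun a b => a.2 = b.1) (x :: rest) :=
        (List.isChain_cons_cons.mp hchain).2
      have hend2 : ((x :: rest).getLast (List.cons_ne_nil x rest)).2 = d := by
        rw [List.getLast_cons (List.cons_ne_nil x rest)] at hend
        exact hend
      have hih := ih x hend2 hchain2 (fun y hy => hedges y (List.mem_cons_of_mem _ hy))
      calc ∑ τ ∈ range (t + 1), dPathPMF p e' (x :: rest) τ
          = ∑ σ ∈ range (t + 1), p e'.1 e'.2 σ *
              ∑ t' ∈ range (t - σ + 1), dPathPMF p x rest t' := by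
            simp only [hsplit]; exact sum_dconv _ _ t
        _ ≤ ∑ σ ∈ range (t + 1), p e'.1 e'.2 σ * u x.1 (t - σ) := by
            refine Finset.sum_le_sum fun σ _ => ?_
            exact mul_le_mul_right (hih (t - σ)) _
        _ = ∑ σ ∈ Finset.Icc (δ e'.1 e'.2) t, p e'.1 e'.2 σ * u e'.2 (t - σ) := by
            rw [← hx1]
            refine (Finset.sum_subset ?_ ?_).symm
            · intro y hy; simp only [mem_Icc] at hy; simp [mem_range]; omega
            · intro y hy hny
              simp only [mem_range] at hy
              simp only [mem_Icc] at hny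
              have hlt : y < δ e'.1 e'.2 := by omega
              simp [hp_supp _ _ _ hlt]
        _ ≤ u e'.1 t := hu_adm e'.1 e'.2 (hedges e' (by simp)) t

/-- discrete time: The mixed reliability of a path prefix `P` from
`s` ending at node `i`, `r^P_{si}(T) = Σ_{t=0}^{T} q^P_{si}(t) u_i(T−t)`,
upper-bounds the reliability of every completion of `P` to the destination: for
any path `P'` from `i` to `d`,  `Σ_{t=0}^{T} q^{P∥P'}_{sd}(t) ≤ r^P_{si}(T)`. -/
theorem mixed_reliability_bounds_all_completions
    {V : Type*} [Fintype V] [DecidableEq V]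
    (E : V → V → Prop)
    (p : V → V → ℕ → ℝ≥0) (δ : V → V → ℕ)
    (u : V → ℕ → ℝ≥0)
    (s i d : V) (T : ℕ)
    (hδ_one : ∀ a b, 1 ≤ δ a b)
    (hp_supp : ∀ a b τ, τ < δ a b → p a b τ = 0)
    (hu_dest : ∀ t, u d t = 1)
    (hu_adm : ∀ a b, E a b → ∀ t,
      (∑ τ ∈ Finset.Icc (δ a b) t, p a b τ * u b (t - τ)) ≤ u a t)
    -- the prefix path `P = e :: es` runs from `s` to `i`
    (e : V × V) (es : List (V × V))
    (hstart : e.1 = s)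
    (hmid : ((e :: es).getLast (List.cons_ne_nil e es)).2 = i)
    (hchain : List.Chain' (fun a b => a.2 = b.1) (e :: es))
    (hedges : ∀ x ∈ e :: es, E x.1 x.2)
    -- the completion `P' = e' :: es'` runs from `i` to `d`
    (e' : V × V) (es' : List (V × V))
    (hstart' : e'.1 = i)
    (hend' : ((e' :: es').getLast (List.cons_ne_nil e' es')).2 = d)
    (hchain' : List.Chain' (fun a b => a.2 = b.1) (e' :: es'))
    (hedges' : ∀ x ∈ e' :: es', E x.1 x.2) :
    (∑ t ∈ Finset.range (T + 1), dPathPMF p e (es ++ e' :: es') t) ≤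
      ∑ t ∈ Finset.range (T + 1), dPathPMF p e es t * u i (T - t) := by
  calc ∑ t ∈ Finset.range (T + 1), dPathPMF p e (es ++ e' :: es') t
      = ∑ τ ∈ Finset.range (T + 1), dPathPMF p e es τ *
          ∑ t' ∈ Finset.range (T - τ + 1), dPathPMF p e' es' t' := by
        rw [dPathPMF_append]; exact sum_dconv _ _ T
    _ ≤ ∑ τ ∈ Finset.range (T + 1), dPathPMF p e es τ * u i (T - τ) := by
        refine Finset.sum_le_sum fun τ _ => mul_le_mul_right ?_ _
        have h := path_reliability_le E p δ u d hp_supp hu_dest hu_adm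
          es' e' hend' hchain' hedges' (T - τ)
        rwa [hstart'] at h
end

section
/- For generalized Arc-Potentials storing activation intervals, pruning is exact in the limit: if for edge (i,j) the stored set S_{ij} ⊆ ℕ contains every budget t at which (i,j) lies on an optimal policy to some d ∈ D, then pruning all edges with T ∉ S_{ij} ∪ [φ̄_{ij}, ∞) (where φ̄_{ij} bounds the next activation) preserves the optimal policy value u_s(T) for all s, all d ∈ D, and all T covered by the stored intervals. -/
open Finset
open scoped NNReal

/-- Edge `(i,j)` is active at budget `t` (for the query source `s`): it is
realizable under the optimal policy `w` toward the destination region when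
starting from `s` with budget `t`. -/
def EdgeActive {V : Type*} (p : V → V → ℕ → ℝ≥0) (w : V → ℕ → V)
    (s : V) (t : ℕ) (i j : V) : Prop :=
  ∃ t' : ℕ, Relation.ReflTransGen (PolicyStep p w) (s, t) (i, t') ∧ w i t' = j

/-- Exactness-in-the-limit of generalized Arc-Potential pruning.
Suppose for each edge `(i,j)` the stored set `S_{ij} ⊆ ℕ` together with the
next-activation lower bound `φ̄_{ij}` covers every active budget
(`EdgeActive → t ∈ S_{ij} ∨ φ̄_{ij} ≤ t`).  Prune, for query budget `T`, every edge
with `T ∉ S_{ij}` and `T < φ̄_{ij}`.  Then the Bellman value toward the destination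
region `D` is preserved: `u'_s(T) = u_s(T)`. -/
theorem generalized_arc_potential_pruning_sound
    {V : Type*} [Fintype V] [DecidableEq V]
    (neighbors : V → Finset V) (D : Finset V)
    (p : V → V → ℕ → ℝ≥0) (δ : V → V → ℕ)
    (u u' : V → ℕ → ℝ≥0) (w : V → ℕ → V)
    (S : V → V → Set ℕ) [∀ i j, DecidablePred (· ∈ S i j)]
    (φbar : V → V → ℕ)
    (s : V) (T : ℕ)
    (hp_mass : ∀ i j n, ∑ τ ∈ Finset.range n, p i j τ ≤ 1)
    (hδ_one : ∀ i j, 1 ≤ δ i j)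
    (hp_supp : ∀ i j τ, τ < δ i j → p i j τ = 0)
    -- `u` is the Bellman value toward the region `D` on the full graph
    (hu_dest : ∀ d ∈ D, ∀ t, u d t = 1)
    (hu_rec : ∀ i, i ∉ D → ∀ t,
      u i t = (neighbors i).sup
        (fun j => ∑ τ ∈ Finset.Icc (δ i j) t, p i j τ * u j (t - τ)))
    -- `w` is an optimal policy attaining `u`
    (hw_mem : ∀ i, i ∉ D → ∀ t, w i t ∈ neighbors i)
    (hw_opt : ∀ i, i ∉ D → ∀ t,
      u i t = ∑ τ ∈ Finset.Icc (δ i (w i t)) t, p i (w i t) τ * u (w i t) (t - τ))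
    -- the stored intervals contain every active budget below the bound `φ̄`
    (hS : ∀ i j t, EdgeActive p w s t i j → t ∈ S i j ∨ φbar i j ≤ t)
    -- `u'` is the Bellman value on the graph pruned for budget `T`
    (hu'_dest : ∀ d ∈ D, ∀ t, u' d t = 1)
    (hu'_rec : ∀ i, i ∉ D → ∀ t,
      u' i t = ((neighbors i).filter (fun j => T ∈ S i j ∨ φbar i j ≤ T)).sup
        (fun j => ∑ τ ∈ Finset.Icc (δ i j) t, p i j τ * u' j (t - τ))) :
    u' s T = u s T := by
  -- Upper bound: u' i t ≤ u i t for all i, t.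
  have upper : ∀ t i, u' i t ≤ u i t := by
    intro t
    induction t using Nat.strong_induction_on with
    | _ t ih =>
      intro i
      by_cases hiD : i ∈ D
      · rw [hu'_dest i hiD, hu_dest i hiD]
      · rw [hu'_rec i hiD, hu_rec i hiD]
        apply Finset.sup_le
        intro j hj
        have hjn : j ∈ neighbors i := (Finset.mem_filter.1 hj).1
        refine le_trans ?_ (Finset.le_sup hjn)
        apply Finset.sum_le_sum
        intro τ hτ
        obtain ⟨h1, h2⟩ := Finset.mem_Icc.1 hτ
        have hτpos : 0 < τ := lt_of_lt_of_le (hδ_one i j) h1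
        have : t - τ < t := Nat.sub_lt (lt_of_lt_of_le hτpos h2) hτpos
        exact mul_le_mul_right (ih _ this j) _
  -- Lower bound along reachable states.
  have lower : ∀ t i, Relation.ReflTransGen (PolicyStep p w) (s, T) (i, t) →
      u i t ≤ u' i t := by
    intro t
    induction t using Nat.strong_induction_on with
    | _ t ih =>
      intro i hreach
      by_cases hiD : i ∈ D
      · rw [hu'_dest i hiD, hu_dest i hiD]
      · set j := w i t with hj
        have hactive : EdgeActive p w s T i j := ⟨t, hreach, rfl⟩
        have hkeep : T ∈ S i j ∨ φbar i j ≤ T := hS i j T hactive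
        have hjn : j ∈ (neighbors i).filter (fun j => T ∈ S i j ∨ φbar i j ≤ T) :=
          Finset.mem_filter.2 ⟨hw_mem i hiD t, hkeep⟩
        rw [hw_opt i hiD t, hu'_rec i hiD]
        refine le_trans ?_ (Finset.le_sup hjn)
        apply Finset.sum_le_sum
        intro τ hτ
        obtain ⟨h1, h2⟩ := Finset.mem_Icc.1 hτ
        have hτpos : 0 < τ := lt_of_lt_of_le (hδ_one i j) h1
        have hlt : t - τ < t := Nat.sub_lt (lt_of_lt_of_le hτpos h2) hτpos
        by_cases hp : p i j τ = 0
        · simp [← hj, hp]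
        · have hppos : 0 < p i j τ := pos_iff_ne_zero.mpr hp
          have hstep : PolicyStep p w (i, t) (j, t - τ) := by
            refine ⟨rfl, hlt, ?_⟩
            simpa [Nat.sub_sub_self h2] using hppos
          have hreach' : Relation.ReflTransGen (PolicyStep p w) (s, T) (j, t - τ) :=
            hreach.tail hstep
          exact mul_le_mul_right (ih _ hlt j hreach') _
  exact le_antisymm (upper T s) (lower T s Relation.ReflTransGen.refl)
end
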